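/- Let G = (V, E) be a finite directed graph with no self-loops and let A'_TV be the associated E × (V ⊔ E ⊔ E) matrix. Let Bas ⊆ V ⊔ E ⊔ E be a set of exactly |E| column indices such that the square E × Bas submatrix of A'_TV is invertible over ℚ; call all other indices nonbasic. Let E_NB = {f ∈ E : both the a⁺-copy and the a⁻-copy of f are nonbasic}, and let 𝒢_NB be the undirected graph on vertex set V whose edges are the edges in E_NB. Then every connected component of 𝒢_NB contains exactly one vertex v such that the column of x_v is nonbasic. -/

import Mathlib

/-- The matrix `A'_TV = [B −I I]` over `ℚ`, with rows indexed by edges and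
columns indexed by `V ⊔ E ⊔ E`. -/
def ATVQ' {V : Type*} [DecidableEq V] (E : Finset (V × V)) :
    Matrix {e : V × V // e ∈ E}
      (V ⊕ ({e : V × V // e ∈ E} ⊕ {e : V × V // e ∈ E})) ℚ :=
  fun e c =>
    match c with
    | Sum.inl v =>
        (if (e : V × V).1 = v then 1 else 0) - (if (e : V × V).2 = v then 1 else 0)
    | Sum.inr (Sum.inl f) => if e = f then -1 else 0
    | Sum.inr (Sum.inr f) => if e = f then 1 else 0

/-- `Bas` is a basis of columns of `A'_TV`: it has `|E|` columns and the
corresponding square `E × Bas` submatrix is invertible over `ℚ` (equivalently,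
the selected columns are linearly independent). -/
def IsBasisCols {V : Type*} [DecidableEq V] (E : Finset (V × V))
    (Bas : Finset (V ⊕ ({e : V × V // e ∈ E} ⊕ {e : V × V // e ∈ E}))) : Prop :=
  Bas.card = E.card ∧
    LinearIndependent ℚ
      (fun b : {c // c ∈ Bas} => fun e : {e : V × V // e ∈ E} => ATVQ' E e (b : _))

/-- The undirected graph `𝒢_NB` on `V` whose edges are the edges of `E` for
which both the `a⁺`- and the `a⁻`-copy are nonbasic. -/
def GNB {V : Type*} [DecidableEq V] (E : Finset (V × V))
    (Bas : Finset (V ⊕ ({e : V × V // e ∈ E} ⊕ {e : V × V // e ∈ E}))) :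
    SimpleGraph V where
  Adj u v := u ≠ v ∧ ∃ f : {e : V × V // e ∈ E},
    ((f : V × V) = (u, v) ∨ (f : V × V) = (v, u)) ∧
    Sum.inr (Sum.inl f) ∉ Bas ∧ Sum.inr (Sum.inr f) ∉ Bas
  symm := by
    constructor
    rintro u v ⟨huv, f, hf, h1, h2⟩
    exact ⟨huv.symm, f, hf.elim Or.inr Or.inl, h1, h2⟩
  loopless := by constructor; rintro u ⟨h, -⟩; exact h rfl

namespace NBAux

variable {V : Type*} [DecidableEq V] (E : Finset (V × V))
  (Bas : Finset (V ⊕ ({e : V × V // e ∈ E} ⊕ {e : V × V // e ∈ E})))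

abbrev Edg := {e : V × V // e ∈ E}

/-- divergence of a "flow" on the edges -/
def dvg [Fintype V] (φ : Edg E → ℚ) (x : V) : ℚ :=
  ∑ e : Edg E, φ e *
    ((if (e : V × V).1 = x then 1 else 0) - (if (e : V × V).2 = x then (1:ℚ) else 0))

lemma dvg_add [Fintype V] (φ ψ : Edg E → ℚ) (x : V) :
    dvg E (φ + ψ) x = dvg E φ x + dvg E ψ x := by
  simp [dvg, add_mul, Finset.sum_add_distrib]

noncomputable def step {u u' : V} (h : (GNB E Bas).Adj u u') : Edg E → ℚ :=
  fun e => if e = h.2.choose then (if (h.2.choose : V × V) = (u, u') then 1 else -1) else 0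

lemma step_support {u u' : V} (h : (GNB E Bas).Adj u u') (f : Edg E)
    (hf : Sum.inr (Sum.inl f) ∈ Bas ∨ Sum.inr (Sum.inr f) ∈ Bas) :
    step E Bas h f = 0 := by
  by_cases heq : f = h.2.choose
  · obtain ⟨-, h1, h2⟩ := h.2.choose_spec
    rw [heq] at hf
    rcases hf with hf | hf
    · exact absurd hf h1
    · exact absurd hf h2
  · simp [step, heq]

lemma dvg_step [Fintype V] {u u' : V} (h : (GNB E Bas).Adj u u') (x : V) :
    dvg E (step E Bas h) x =
      (if u = x then 1 else 0) - (if u' = x then (1:ℚ) else 0) := by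
  obtain ⟨hor, -, -⟩ := h.2.choose_spec
  have hne : u ≠ u' := h.1
  unfold dvg step
  rw [Finset.sum_eq_single h.2.choose]
  · rw [if_pos rfl]
    rcases hor with hor | hor
    · rw [hor]; simp
    · have hne2 : ((u', u) : V × V) ≠ (u, u') :=
        fun hc => hne (congrArg Prod.snd hc)
      rw [hor, if_neg hne2]
      ring
  · intro b _ hb
    simp [hb]
  · intro hb
    exact absurd (Finset.mem_univ _) hb

noncomputable def flow [Fintype V] : {a b : V} → (GNB E Bas).Walk a b → Edg E → ℚ
  | _, _, SimpleGraph.Walk.nil => 0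
  | _, _, SimpleGraph.Walk.cons h p => step E Bas h + flow p

@[simp] lemma flow_nil [Fintype V] {a : V} :
    flow E Bas (SimpleGraph.Walk.nil : (GNB E Bas).Walk a a) = 0 := rfl

lemma flow_cons [Fintype V] {a u b : V} (h : (GNB E Bas).Adj a u)
    (p : (GNB E Bas).Walk u b) :
    flow E Bas (SimpleGraph.Walk.cons h p) = step E Bas h + flow E Bas p := rfl

lemma flow_support [Fintype V] {a b : V} (p : (GNB E Bas).Walk a b) (f : Edg E)
    (hf : Sum.inr (Sum.inl f) ∈ Bas ∨ Sum.inr (Sum.inr f) ∈ Bas) :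
    flow E Bas p f = 0 := by
  induction p with
  | nil => simp
  | cons h p ih =>
    rw [flow_cons, Pi.add_apply, step_support E Bas h f hf, ih, add_zero]

lemma flow_dvg [Fintype V] {a b : V} (p : (GNB E Bas).Walk a b) (x : V) :
    dvg E (flow E Bas p) x =
      (if a = x then 1 else 0) - (if b = x then (1:ℚ) else 0) := by
  induction p with
  | nil => simp [dvg]
  | cons h p ih =>
    rw [flow_cons, dvg_add, dvg_step E Bas h x, ih]
    ring

lemma sum_mul_ind [Fintype V] (F : V → ℚ) (a b : V) :
    ∑ u, F u * ((if a = u then 1 else 0) - (if b = u then (1:ℚ) else 0))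
      = F a - F b := by
  simp [mul_sub, mul_ite, mul_one, mul_zero, Finset.sum_sub_distrib,
    Finset.sum_ite_eq]

lemma sum_mul_delta {α : Type*} [Fintype α] [DecidableEq α] (F : α → ℚ) (a : α) (r : ℚ) :
    ∑ u, F u * (if a = u then r else 0) = F a * r := by
  simp [mul_ite, mul_zero, Finset.sum_ite_eq]

lemma sum_mul_delta' {α : Type*} [Fintype α] [DecidableEq α] (F : α → ℚ) (a : α) (r : ℚ) :
    ∑ u, F u * (if u = a then r else 0) = F a * r := by
  simp [mul_ite, mul_zero, Finset.sum_ite_eq']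

end NBAux

open NBAux in
/-- For any basic solution of `A'_TV`, every connected
component of the nonbasic-edge graph `𝒢_NB` contains exactly one vertex `v`
whose variable `x_v` is nonbasic. -/
theorem each_tree_has_unique_nonbasic_root
    {V : Type*} [Fintype V] [DecidableEq V] (E : Finset (V × V))
    (hloop : ∀ e ∈ E, e.1 ≠ e.2)
    (Bas : Finset (V ⊕ ({e : V × V // e ∈ E} ⊕ {e : V × V // e ∈ E})))
    (hBas : IsBasisCols E Bas) :
    ∀ c : (GNB E Bas).ConnectedComponent,
      ∃! v : V, (GNB E Bas).connectedComponentMk v = c ∧ Sum.inl v ∉ Bas := by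
  classical
  obtain ⟨hcard, hind⟩ := hBas
  intro c
  have hcardeq : Fintype.card {x // x ∈ Bas} = Module.finrank ℚ (Edg E → ℚ) := by
    rw [Module.finrank_fintype_fun_eq_card, Fintype.card_coe, hcard, Fintype.card_coe]
  -- existence
  have hex : ∃ v, (GNB E Bas).connectedComponentMk v = c ∧ Sum.inl v ∉ Bas := by
    by_contra hno
    push_neg at hno
    set χ : Edg E → ℚ := fun f =>
      (if (GNB E Bas).connectedComponentMk (f : V × V).1 = c then 1 else 0)
      - (if (GNB E Bas).connectedComponentMk (f : V × V).2 = c then 1 else 0) with hχ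
    set Gf : (V ⊕ (Edg E ⊕ Edg E)) → ℚ :=
      Sum.elim (fun u => if (GNB E Bas).connectedComponentMk u = c then (1:ℚ) else 0)
        (Sum.elim
          (fun f => if Sum.inr (Sum.inl f) ∈ Bas then χ f else 0)
          (fun f => if Sum.inr (Sum.inr f) ∈ Bas ∧ Sum.inr (Sum.inl f) ∉ Bas
            then -χ f else 0)) with hGf
    have hGf0 : ∀ x ∉ Bas, Gf x = 0 := by
      rintro (u | f | f) hx
      · simp only [hGf, Sum.elim_inl, ite_eq_right_iff]
        intro hu
        exact absurd (hno u hu) hx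
      · simp [hGf, hx]
      · simp [hGf, hx]
    have hrow : ∀ e : Edg E, ∑ x : V ⊕ (Edg E ⊕ Edg E), Gf x * ATVQ' E e x = 0 := by
      intro e
      rw [Fintype.sum_sum_type, Fintype.sum_sum_type]
      have t1 : ∑ u : V, Gf (Sum.inl u) * ATVQ' E e (Sum.inl u)
          = Gf (Sum.inl (e : V × V).1) - Gf (Sum.inl (e : V × V).2) :=
        sum_mul_ind (fun u => Gf (Sum.inl u)) _ _
      have t2 : ∑ f : Edg E, Gf (Sum.inr (Sum.inl f)) * ATVQ' E e (Sum.inr (Sum.inl f))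
          = Gf (Sum.inr (Sum.inl e)) * (-1) :=
        sum_mul_delta (fun f => Gf (Sum.inr (Sum.inl f))) e (-1)
      have t3 : ∑ f : Edg E, Gf (Sum.inr (Sum.inr f)) * ATVQ' E e (Sum.inr (Sum.inr f))
          = Gf (Sum.inr (Sum.inr e)) * 1 :=
        sum_mul_delta (fun f => Gf (Sum.inr (Sum.inr f))) e 1
      rw [t1, t2, t3]
      have hv1 : Gf (Sum.inl (e : V × V).1)
          = (if (GNB E Bas).connectedComponentMk (e : V × V).1 = c then (1:ℚ) else 0) := rfl
      have hv2 : Gf (Sum.inl (e : V × V).2)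
          = (if (GNB E Bas).connectedComponentMk (e : V × V).2 = c then (1:ℚ) else 0) := rfl
      by_cases h1 : Sum.inr (Sum.inl e) ∈ Bas
      · have he1 : Gf (Sum.inr (Sum.inl e)) = χ e := by simp [hGf, h1]
        have he2 : Gf (Sum.inr (Sum.inr e)) = 0 := by simp [hGf, h1]
        rw [hv1, hv2, he1, he2, hχ]
        ring
      · by_cases h2 : Sum.inr (Sum.inr e) ∈ Bas
        · have he1 : Gf (Sum.inr (Sum.inl e)) = 0 := by simp [hGf, h1]
          have he2 : Gf (Sum.inr (Sum.inr e)) = -χ e := by simp [hGf, h1, h2]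
          rw [hv1, hv2, he1, he2, hχ]
          ring
        · have hadj : (GNB E Bas).Adj (e : V × V).1 (e : V × V).2 :=
            ⟨hloop e e.2, e, Or.inl rfl, h1, h2⟩
          have hmk : (GNB E Bas).connectedComponentMk (e : V × V).1
              = (GNB E Bas).connectedComponentMk (e : V × V).2 :=
            SimpleGraph.ConnectedComponent.sound hadj.reachable
          have he1 : Gf (Sum.inr (Sum.inl e)) = 0 := by simp [hGf, h1]
          have he2 : Gf (Sum.inr (Sum.inr e)) = 0 := by simp [hGf, h2]
          rw [hv1, hv2, he1, he2, hmk]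
          ring
    have hzero : ∑ b : {x // x ∈ Bas},
        Gf (b : _) • (fun e : Edg E => ATVQ' E e (b : _)) = 0 := by
      funext e
      rw [Finset.sum_apply]
      have : ∀ b : {x // x ∈ Bas},
          (Gf (b : _) • (fun e : Edg E => ATVQ' E e (b : _))) e
            = Gf (b : _) * ATVQ' E e (b : _) := fun b => rfl
      rw [Finset.sum_congr rfl fun b _ => this b]
      rw [Finset.sum_coe_sort Bas (fun x => Gf x * ATVQ' E e x)]
      rw [Finset.sum_subset (Finset.subset_univ Bas)
        (fun x _ hx => by rw [hGf0 x hx, zero_mul])]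
      exact hrow e
    have hall := Fintype.linearIndependent_iff.mp hind (fun b => Gf (b : _)) hzero
    obtain ⟨v, hv⟩ := c.exists_rep
    have hvB : Sum.inl v ∈ Bas := hno v hv
    have h1 := hall ⟨Sum.inl v, hvB⟩
    norm_num [hGf] at h1
    exact h1 hv
  -- uniqueness
  obtain ⟨v, hvc, hvB⟩ := hex
  refine ⟨v, ⟨hvc, hvB⟩, ?_⟩
  rintro y ⟨hyc, hyB⟩
  by_contra hne
  have hreach : (GNB E Bas).Reachable y v :=
    SimpleGraph.ConnectedComponent.exact (hyc.trans hvc.symm)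
  obtain ⟨p⟩ := hreach
  set φ : Edg E → ℚ := flow E Bas p with hφ
  have hspan : Submodule.span ℚ
      (Set.range (fun b : {x // x ∈ Bas} => fun e : Edg E => ATVQ' E e (b : _))) = ⊤ :=
    hind.span_eq_top_of_card_eq_finrank' hcardeq
  set ψ : (Edg E → ℚ) →ₗ[ℚ] ℚ :=
    { toFun := fun z => ∑ e : Edg E, φ e * z e
      map_add' := fun z w => by
        simp [mul_add, Finset.sum_add_distrib]
      map_smul' := fun r z => by
        simp only [Pi.smul_apply, smul_eq_mul, RingHom.id_apply, Finset.mul_sum]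
        exact Finset.sum_congr rfl fun e _ => by ring } with hψ
  have hψcol : ∀ b : {x // x ∈ Bas}, ψ (fun e : Edg E => ATVQ' E e (b : _)) = 0 := by
    rintro ⟨(u | f | f), hb⟩
    · have hd : ψ (fun e : Edg E => ATVQ' E e (Sum.inl u)) = dvg E φ u := rfl
      rw [hd, hφ, flow_dvg]
      have h1 : y ≠ u := fun h => hyB (h ▸ hb)
      have h2 : v ≠ u := fun h => hvB (h ▸ hb)
      simp [h1, h2]
    · have hd : ψ (fun e : Edg E => ATVQ' E e (Sum.inr (Sum.inl f)))
          = ∑ e : Edg E, φ e * (if e = f then (-1:ℚ) else 0) := rfl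
      rw [hd, sum_mul_delta', hφ, flow_support E Bas p f (Or.inl hb)]
      ring
    · have hd : ψ (fun e : Edg E => ATVQ' E e (Sum.inr (Sum.inr f)))
          = ∑ e : Edg E, φ e * (if e = f then (1:ℚ) else 0) := rfl
      rw [hd, sum_mul_delta', hφ, flow_support E Bas p f (Or.inr hb)]
      ring
  have hψ0 : ψ = 0 := LinearMap.ext_on_range hspan hψcol
  have hone : ψ (fun e : Edg E => ATVQ' E e (Sum.inl y)) = 1 := by
    have hd : ψ (fun e : Edg E => ATVQ' E e (Sum.inl y)) = dvg E φ y := rfl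
    rw [hd, hφ, flow_dvg]
    have h2 : v ≠ y := fun h => hne h.symm
    simp [h2]
  rw [hψ0] at hone
  exact one_ne_zero hone.symm
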